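/- With Γ₂ = 𝟙⊗𝟙 + √2 ∑_i ∂_i ⊗ T_i − √2 ∑_i x_i ⊗ T_{−i} on V = ℂ[x₁,…,xₙ]⊗ℂ^{2n+1} as defined above, and X_{δ_j} acting on V by the tensor product rule X_{δ_j}(x^k ⊗ v) = (1/√2)x^{k+δ_j} ⊗ v + (−1)^{|k|} x^k ⊗ T_j(v), the intertwining identity X_{δ_j}(Γ₂(x^k ⊗ v₀)) = Γ₂(−(1/√2) x^{k+δ_j} ⊗ v₀) holds for all multi-indices k and all 1 ≤ j ≤ n. -/
import Mathlib


open Finsupp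

noncomputable section

abbrev V (n : ℕ) : Type := ((Fin n →₀ ℕ) × Fin (2*n+1)) →₀ ℂ

def b {n : ℕ} (k : Fin n →₀ ℕ) (j : Fin (2*n+1)) : V n := Finsupp.single (k, j) 1

def mkOp {n : ℕ} (g : (Fin n →₀ ℕ) × Fin (2*n+1) → V n) : V n →ₗ[ℂ] V n :=
  Finsupp.lsum ℂ fun a => LinearMap.toSpanSingleton ℂ (V n) (g a)

def deg {n : ℕ} (k : Fin n →₀ ℕ) : ℕ := k.sum fun _ v => v

def sgn {n : ℕ} (k : Fin n →₀ ℕ) : ℂ := (-1) ^ deg k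

def rt2 : ℂ := Real.sqrt 2

def idx0 {n : ℕ} : Fin (2*n+1) := ⟨0, by omega⟩

def idxLo {n : ℕ} (i : Fin n) : Fin (2*n+1) := ⟨i.1+1, by have := i.isLt; omega⟩

def idxHi {n : ℕ} (i : Fin n) : Fin (2*n+1) := ⟨n+i.1+1, by have := i.isLt; omega⟩

/-- `T_i` applied to `x^k ⊗ v_j` (without the parity sign). -/
def TpApp {n : ℕ} (i : Fin n) (k : Fin n →₀ ℕ) (j : Fin (2*n+1)) : V n :=
  if j = idx0 then b k (idxLo i) else if j = idxHi i then b k idx0 else 0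

/-- `T_{-i}` applied to `x^k ⊗ v_j` (without the parity sign). -/
def TmApp {n : ℕ} (i : Fin n) (k : Fin n →₀ ℕ) (j : Fin (2*n+1)) : V n :=
  if j = idx0 then -(b k (idxHi i)) else if j = idxLo i then b k idx0 else 0

/-- The action of the odd root vector `X_{δ_j}` on `ℂ[x] ⊗ ℂ^{1|2n}`. -/
def Xplus {n : ℕ} (jj : Fin n) : V n →ₗ[ℂ] V n :=
  mkOp fun p => rt2⁻¹ • b (p.1 + Finsupp.single jj 1) p.2 + sgn p.1 • TpApp jj p.1 p.2

/-- The action of the odd root vector `X_{-δ_i}` on `ℂ[x] ⊗ ℂ^{1|2n}`. -/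
def Xminus {n : ℕ} (i : Fin n) : V n →ₗ[ℂ] V n :=
  mkOp fun p => (rt2⁻¹ * (p.1 i : ℂ)) • b (p.1 - Finsupp.single i 1) p.2
    + sgn p.1 • TmApp i p.1 p.2

/-- `Γ_{w₂} = 1⊗1 + √2 ∑ ∂_i ⊗ T_i - √2 ∑ x_i ⊗ T_{-i}`. -/
def Gamma2 {n : ℕ} : V n →ₗ[ℂ] V n :=
  mkOp fun p => b p.1 p.2
    + rt2 • ∑ i : Fin n, (sgn p.1 * (p.1 i : ℂ)) • TpApp i (p.1 - Finsupp.single i 1) p.2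
    - rt2 • ∑ i : Fin n, sgn p.1 • TmApp i (p.1 + Finsupp.single i 1) p.2

/-- `Γ_{w₁} = 1⊗1 - √2 ∑ ∂_i ⊗ T_i + √2 ∑ x_i ⊗ T_{-i}`. -/
def Gamma1 {n : ℕ} : V n →ₗ[ℂ] V n :=
  mkOp fun p => b p.1 p.2
    - rt2 • ∑ i : Fin n, (sgn p.1 * (p.1 i : ℂ)) • TpApp i (p.1 - Finsupp.single i 1) p.2
    + rt2 • ∑ i : Fin n, sgn p.1 • TmApp i (p.1 + Finsupp.single i 1) p.2

section Helpers
variable {n : ℕ}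

@[simp] lemma mkOp_b (g : (Fin n →₀ ℕ) × Fin (2*n+1) → V n) (k : Fin n →₀ ℕ) (j : Fin (2*n+1)) :
    mkOp g (b k j) = g (k, j) := by
  simp [mkOp, b]

lemma idxLo_ne_idx0 (i : Fin n) : (idxLo i) ≠ (idx0 : Fin (2*n+1)) := by
  simp [idxLo, idx0, Fin.ext_iff]

lemma idxHi_ne_idx0 (i : Fin n) : (idxHi i) ≠ (idx0 : Fin (2*n+1)) := by
  simp [idxHi, idx0, Fin.ext_iff]

lemma idxLo_ne_idxHi (i j : Fin n) : idxLo i ≠ idxHi j := by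
  have hi := i.isLt
  intro h
  have := congrArg Fin.val h
  simp only [idxLo, idxHi] at this
  omega

lemma idxHi_inj (i j : Fin n) : (idxHi i : Fin (2*n+1)) = idxHi j ↔ i = j := by
  simp [idxHi, Fin.ext_iff]

lemma Tp_idx0 (i : Fin n) (k : Fin n →₀ ℕ) : TpApp i k idx0 = b k (idxLo i) := by
  simp [TpApp]

lemma Tm_idx0 (i : Fin n) (k : Fin n →₀ ℕ) : TmApp i k idx0 = -(b k (idxHi i)) := by
  simp [TmApp]

lemma Tp_lo (jj i : Fin n) (k : Fin n →₀ ℕ) : TpApp jj k (idxLo i) = 0 := by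
  simp [TpApp, idxLo_ne_idx0, idxLo_ne_idxHi]

lemma Tp_hi (jj i : Fin n) (k : Fin n →₀ ℕ) :
    TpApp jj k (idxHi i) = if i = jj then b k idx0 else 0 := by
  simp [TpApp, idxHi_ne_idx0, idxHi_inj]

lemma deg_add (k m : Fin n →₀ ℕ) : deg (k + m) = deg k + deg m := by
  simp [deg, Finsupp.sum_add_index']

lemma deg_single (i : Fin n) : deg (Finsupp.single i 1) = 1 := by
  simp [deg, Finsupp.sum_single_index]

lemma sgn_add_single (k : Fin n →₀ ℕ) (i : Fin n) :
    sgn (k + Finsupp.single i 1) = -sgn k := by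
  rw [sgn, sgn, deg_add, deg_single, pow_succ]
  ring

lemma sgn_sq (k : Fin n →₀ ℕ) : sgn k * sgn k = 1 := by
  simp [sgn, ← mul_pow]

lemma rt2_ne : (rt2 : ℂ) ≠ 0 := by
  simp only [rt2, ne_eq, Complex.ofReal_eq_zero]
  positivity

lemma rt2_mul_self : rt2 * rt2 = 2 := by
  rw [rt2, ← Complex.ofReal_mul, Real.mul_self_sqrt (by norm_num)]
  norm_num

end Helpers
section Main
variable {n : ℕ}

lemma Xplus_b (jj : Fin n) (m : Fin n →₀ ℕ) (p : Fin (2*n+1)) :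
    Xplus jj (b m p) = rt2⁻¹ • b (m + Finsupp.single jj 1) p + sgn m • TpApp jj m p := by
  simp [Xplus]

lemma Gamma2_b (m : Fin n →₀ ℕ) :
    Gamma2 (b m idx0) = b m idx0
      + rt2 • ∑ i : Fin n, (sgn m * (m i : ℂ)) • b (m - Finsupp.single i 1) (idxLo i)
      + rt2 • ∑ i : Fin n, sgn m • b (m + Finsupp.single i 1) (idxHi i) := by
  simp [Gamma2, Tp_idx0, Tm_idx0, smul_neg, Finset.sum_neg_distrib, sub_neg_eq_add]

lemma sub_add_comm' (k : Fin n →₀ ℕ) {i j : Fin n} (h : i ≠ j) :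
    k + Finsupp.single j 1 - Finsupp.single i 1 = k - Finsupp.single i 1 + Finsupp.single j 1 := by
  ext a
  simp only [Finsupp.tsub_apply, Finsupp.add_apply, Finsupp.single_apply]
  by_cases hai : i = a <;> by_cases haj : j = a <;> simp_all <;> omega

end Main
section SumA
variable {n : ℕ}

lemma sumA (c : ℂ) (k : Fin n →₀ ℕ) (j : Fin n) :
    ∑ i : Fin n, (c * (((k + Finsupp.single j 1 : Fin n →₀ ℕ)) i : ℂ)) • b (k + Finsupp.single j 1 - Finsupp.single i 1) (idxLo i)
    = c • b k (idxLo j)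
      + ∑ i : Fin n, (c * (k i : ℂ)) • b (k - Finsupp.single i 1 + Finsupp.single j 1) (idxLo i) := by
  rw [← Finset.add_sum_erase _ _ (Finset.mem_univ j),
      ← Finset.add_sum_erase _ _ (Finset.mem_univ j), ← add_assoc]
  congr 1
  · -- j-terms
    have hjj : (k + Finsupp.single j (1:ℕ)) j = k j + 1 := by simp
    rw [hjj, add_tsub_cancel_right]
    push_cast
    by_cases hkj : k j = 0
    · have h0 : k - Finsupp.single j 1 = k := by
        ext a
        simp only [Finsupp.tsub_apply, Finsupp.single_apply]
        by_cases h : j = a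
        · subst h; omega
        · simp [h]
      simp [hkj, h0]
    · have hle : Finsupp.single j 1 ≤ k := by
        rw [Finsupp.single_le_iff]; omega
      rw [tsub_add_cancel_of_le hle]
      rw [mul_add, mul_one, add_smul, add_comm]
  · apply Finset.sum_congr rfl
    intro i hi
    have hij : i ≠ j := Finset.ne_of_mem_erase hi
    rw [sub_add_comm' k hij]
    have hki : (k + Finsupp.single j (1:ℕ)) i = k i := by
      simp [Finsupp.single_apply, hij.symm]
    rw [hki]

end SumA
/-- Intertwining identity `X_{δⱼ} ∘ Γ₂ = Γ₂ ∘ (-(1/√2)·xⱼ)` on `x^k ⊗ v₀`. -/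
theorem stmt12 (n : ℕ) (k : Fin n →₀ ℕ) (j : Fin n) :
    Xplus j (Gamma2 (b k idx0)) =
      Gamma2 ((-rt2⁻¹) • b (k + Finsupp.single j 1) idx0) := by
  rw [map_smul, Gamma2_b, Gamma2_b]
  simp only [map_add, map_smul, map_sum, Xplus_b, Tp_idx0, Tp_lo, Tp_hi,
    smul_zero, add_zero, sgn_add_single, sumA]
  simp only [smul_add, smul_ite, smul_zero, Finset.sum_add_distrib, Finset.sum_ite_eq',
    Finset.mem_univ, if_true]
  have hS : (∑ x : Fin n, (sgn k * (k x : ℂ)) • rt2⁻¹ •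
        b ((k - Finsupp.single x 1) + Finsupp.single j 1) (idxLo x))
      = rt2⁻¹ • ∑ x : Fin n, (sgn k * (k x : ℂ)) •
        b ((k - Finsupp.single x 1) + Finsupp.single j 1) (idxLo x) := by
    rw [Finset.smul_sum]
    exact Finset.sum_congr rfl fun x _ => smul_comm _ _ _
  have hT : (∑ x : Fin n, sgn k • rt2⁻¹ •
        b ((k + Finsupp.single x 1) + Finsupp.single j 1) (idxHi x))
      = rt2⁻¹ • ∑ x : Fin n, sgn k •
        b ((k + Finsupp.single j 1) + Finsupp.single x 1) (idxHi x) := by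
    rw [Finset.smul_sum]
    refine Finset.sum_congr rfl fun x _ => ?_
    rw [add_right_comm, smul_comm]
  have h3 : (∑ i : Fin n, (-sgn k * (k i : ℂ)) •
        b ((k - Finsupp.single i 1) + Finsupp.single j 1) (idxLo i))
      = -∑ i : Fin n, (sgn k * (k i : ℂ)) •
        b ((k - Finsupp.single i 1) + Finsupp.single j 1) (idxLo i) := by
    rw [← Finset.sum_neg_distrib]
    exact Finset.sum_congr rfl fun x _ => by rw [neg_mul, neg_smul]
  have h4 : (∑ x : Fin n, (-sgn k) •
        b ((k + Finsupp.single j 1) + Finsupp.single x 1) (idxHi x))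
      = -∑ x : Fin n, sgn k •
        b ((k + Finsupp.single j 1) + Finsupp.single x 1) (idxHi x) := by
    rw [← Finset.sum_neg_distrib]
    exact Finset.sum_congr rfl fun x _ => by rw [neg_smul]
  have h5 : sgn k • (-sgn k) • b (k + Finsupp.single j 1) idx0
      = -(b (k + Finsupp.single j 1) (idx0 : Fin (2*n+1))) := by
    rw [smul_smul, mul_neg, sgn_sq, neg_smul, one_smul]
  rw [hS, hT, h3, h4, h5]
  have h2 := rt2_mul_self
  have hne := rt2_ne
  match_scalars <;> field_simp
  linear_combination -h2
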